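/- Let 𝒞 be a cluster system on a nonempty finite set X. The restriction of the Shapley value SV to 𝕡𝔻(𝒞) is additive (Ψ(g₁+g₂) = Ψ(g₁)+Ψ(g₂) for all g₁, g₂ ∈ 𝕡𝔻(𝒞)), Pareto efficient (Σ_{x∈X} (Ψ(g))(x) = g(X) for all g ∈ 𝕡𝔻(𝒞)), and group proportional ((Ψ(a·g_C))(x) = a/|C| if x ∈ C and 0 if x ∉ C, for all C ∈ 𝒞 and a ∈ ℝ). Moreover, it is the unique map Ψ : 𝕡𝔻(𝒞) → ℝ^X with these three properties. -/

import Mathlib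

open Finset

/-- The game `g_C` associated with a nonempty subset `C ⊆ X`:
`g_C(M) = 1` if `C ∩ M ≠ ∅` and `g_C(M) = 0` otherwise. -/
noncomputable def gC {α : Type*} [DecidableEq α] (C : Finset α) : Finset α → ℝ :=
  fun M => if (C ∩ M).Nonempty then 1 else 0

/-- The set `𝕡𝔻(𝒞)` of games arising as `PD_ω` for some weighting `ω` of `𝒞`,
where `PD_ω(M) = ∑_{C ∈ 𝒞, M ∩ C ≠ ∅} ω(C)`. -/
def PDset {α : Type*} [DecidableEq α] (𝒞 : Finset (Finset α)) :
    Set (Finset α → ℝ) :=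
  {g | ∃ ω : ↥𝒞 → ℝ, g = fun M => ∑ C : ↥𝒞, if (M ∩ C.1).Nonempty then ω C else 0}

/-- The Shapley value of a game `g : 𝒫(X) → ℝ`. -/
noncomputable def SV {α : Type*} [Fintype α] [DecidableEq α]
    (g : Finset α → ℝ) (x : α) : ℝ :=
  (1 / (Nat.factorial (Fintype.card α) : ℝ)) *
    ∑ M ∈ Finset.univ.filter (fun M : Finset α => x ∈ M),
      (Nat.factorial (M.card - 1) : ℝ) * (Nat.factorial (Fintype.card α - M.card) : ℝ) *
        (g M - g (M.erase x))

section AuxLemmas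

set_option linter.unusedSectionVars false

/-- Hockey-stick identity. -/
lemma hockey_aux (d m : ℕ) :
    ∑ j ∈ Finset.range (m + 1), (d + j).choose d = (d + m + 1).choose (d + 1) := by
  induction m with
  | zero => simp
  | succ m ih =>
      rw [Finset.sum_range_succ, ih, show d + (m + 1) = d + m + 1 by omega]
      have : (d + m + 1 + 1).choose (d + 1) =
          (d + m + 1).choose d + (d + m + 1).choose (d + 1) := Nat.choose_succ_succ' _ _
      omega

lemma key_nat_aux (m c : ℕ) (hc : 0 < c) :
    c * ∑ k ∈ Finset.range (m + 1),
        m.choose k * (k.factorial * (m + c - 1 - k).factorial)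
      = (m + c).factorial := by
  obtain ⟨d, rfl⟩ : ∃ d, c = d + 1 := ⟨c - 1, (Nat.succ_pred_eq_of_pos hc).symm⟩
  have hterm : ∀ k ∈ Finset.range (m + 1),
      m.choose k * (k.factorial * (m + (d + 1) - 1 - k).factorial)
        = m.factorial * d.factorial * (d + (m - k)).choose d := by
    intro k hk
    rw [Finset.mem_range] at hk
    have hk' : k ≤ m := Nat.lt_succ_iff.mp hk
    rw [show m + (d + 1) - 1 - k = d + (m - k) by omega]
    have h2 : (d + (m - k)).choose d * d.factorial * (m - k).factorial
        = (d + (m - k)).factorial := by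
      have := Nat.choose_mul_factorial_mul_factorial (show d ≤ d + (m - k) by omega)
      simpa using this
    have h3 : m.choose k * k.factorial * (m - k).factorial = m.factorial :=
      Nat.choose_mul_factorial_mul_factorial hk'
    have hpos : 0 < (m - k).factorial := Nat.factorial_pos _
    apply Nat.eq_of_mul_eq_mul_right hpos
    calc m.choose k * (k.factorial * (d + (m - k)).factorial) * (m - k).factorial
        = (m.choose k * k.factorial * (m - k).factorial) * (d + (m - k)).factorial := by ring
      _ = m.factorial * ((d + (m - k)).choose d * d.factorial * (m - k).factorial) := by
          rw [h3, h2]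
      _ = m.factorial * d.factorial * (d + (m - k)).choose d * (m - k).factorial := by ring
  rw [Finset.sum_congr rfl hterm, ← Finset.mul_sum]
  have hrefl : ∑ k ∈ Finset.range (m + 1), (d + (m - k)).choose d
      = ∑ j ∈ Finset.range (m + 1), (d + j).choose d :=
    Finset.sum_range_reflect (fun j => (d + j).choose d) (m + 1)
  rw [hrefl, hockey_aux]
  have h4 := Nat.choose_mul_factorial_mul_factorial (show d + 1 ≤ d + m + 1 by omega)
  rw [show d + m + 1 - (d + 1) = m by omega] at h4
  rw [show m + (d + 1) = d + m + 1 by omega, ← h4, Nat.factorial_succ]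
  ring

variable {α : Type*} [Fintype α] [DecidableEq α]

lemma SV_add' (p q : Finset α → ℝ) (x : α) :
    SV (fun M => p M + q M) x = SV p x + SV q x := by
  unfold SV
  rw [← mul_add, ← Finset.sum_add_distrib]
  congr 1
  refine Finset.sum_congr rfl fun M _ => ?_
  ring

lemma SV_smul' (a : ℝ) (p : Finset α → ℝ) (x : α) :
    SV (a • p) x = a * SV p x := by
  simp only [SV, Pi.smul_apply, smul_eq_mul]
  rw [mul_left_comm]
  congr 1
  rw [Finset.mul_sum]
  refine Finset.sum_congr rfl fun M _ => ?_
  ring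

lemma SV_sum' {ι : Type*} (s : Finset ι) (f : ι → Finset α → ℝ) (x : α) :
    SV (fun M => ∑ i ∈ s, f i M) x = ∑ i ∈ s, SV (f i) x := by
  classical
  induction s using Finset.induction_on with
  | empty => simp [SV]
  | insert _ _ h ih =>
      simp only [Finset.sum_insert h]
      rw [SV_add', ih]

lemma gC_diff_notmem {C : Finset α} {x : α} (hx : x ∉ C) (M : Finset α) :
    gC C M - gC C (M.erase x) = 0 := by
  have h : C ∩ M.erase x = C ∩ M := by
    ext y
    simp only [Finset.mem_inter, Finset.mem_erase]
    constructor
    · rintro ⟨hyC, _, hyM⟩; exact ⟨hyC, hyM⟩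
    · rintro ⟨hyC, hyM⟩
      exact ⟨hyC, fun hyx => hx (hyx ▸ hyC), hyM⟩
  unfold gC
  rw [h, sub_self]

lemma gC_diff_mem {C M : Finset α} {x : α} (hxC : x ∈ C) (hxM : x ∈ M) :
    gC C M - gC C (M.erase x) = if C ∩ M = {x} then 1 else 0 := by
  unfold gC
  rw [if_pos ⟨x, Finset.mem_inter.2 ⟨hxC, hxM⟩⟩]
  by_cases h : (C ∩ M.erase x).Nonempty
  · rw [if_pos h, sub_self, if_neg]
    obtain ⟨y, hy⟩ := h
    rw [Finset.mem_inter, Finset.mem_erase] at hy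
    intro heq
    have : y ∈ ({x} : Finset α) := heq ▸ Finset.mem_inter.2 ⟨hy.1, hy.2.2⟩
    exact hy.2.1 (Finset.mem_singleton.1 this)
  · rw [if_neg h, sub_zero, if_pos]
    apply Finset.Subset.antisymm
    · intro y hy
      rw [Finset.mem_inter] at hy
      rw [Finset.mem_singleton]
      by_contra hne
      exact h ⟨y, Finset.mem_inter.2 ⟨hy.1, Finset.mem_erase.2 ⟨hne, hy.2⟩⟩⟩
    · rw [Finset.singleton_subset_iff, Finset.mem_inter]
      exact ⟨hxC, hxM⟩

lemma SV_gC (C : Finset α) (hC : C.Nonempty) (x : α) :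
    SV (gC C) x = if x ∈ C then 1 / (C.card : ℝ) else 0 := by
  set n := Fintype.card α with hn
  by_cases hx : x ∈ C
  · rw [if_pos hx]
    unfold SV
    rw [← hn]
    have hstep1 : ∀ M ∈ Finset.univ.filter (fun M : Finset α => x ∈ M),
        (Nat.factorial (M.card - 1) : ℝ) * (Nat.factorial (n - M.card) : ℝ) *
          (gC C M - gC C (M.erase x))
        = if C ∩ M = {x} then
            (Nat.factorial (M.card - 1) : ℝ) * (Nat.factorial (n - M.card) : ℝ) else 0 := by
      intro M hM
      rw [Finset.mem_filter] at hM
      rw [gC_diff_mem hx hM.2, mul_ite, mul_one, mul_zero]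
    rw [Finset.sum_congr rfl hstep1, ← Finset.sum_filter, Finset.filter_filter]
    have hfil : Finset.univ.filter (fun M : Finset α => x ∈ M ∧ C ∩ M = {x})
        = Finset.univ.filter (fun M : Finset α => C ∩ M = {x}) := by
      apply Finset.filter_congr
      intro M _
      constructor
      · exact fun h => h.2
      · intro h
        refine ⟨?_, h⟩
        have : x ∈ C ∩ M := h ▸ Finset.mem_singleton_self x
        exact (Finset.mem_inter.1 this).2
    rw [hfil]
    have hbij : ∑ M ∈ Finset.univ.filter (fun M : Finset α => C ∩ M = {x}),
          (Nat.factorial (M.card - 1) : ℝ) * (Nat.factorial (n - M.card) : ℝ)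
        = ∑ S ∈ (Finset.univ \ C).powerset,
          (Nat.factorial S.card : ℝ) * (Nat.factorial (n - 1 - S.card) : ℝ) := by
      apply Finset.sum_nbij' (i := fun M => M.erase x) (j := fun S => insert x S)
      · intro M hM
        rw [Finset.mem_filter] at hM
        rw [Finset.mem_powerset]
        intro y hy
        rw [Finset.mem_erase] at hy
        rw [Finset.mem_sdiff]
        refine ⟨Finset.mem_univ y, fun hyC => ?_⟩
        have : y ∈ ({x} : Finset α) := hM.2 ▸ Finset.mem_inter.2 ⟨hyC, hy.2⟩
        exact hy.1 (Finset.mem_singleton.1 this)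
      · intro S hS
        rw [Finset.mem_powerset] at hS
        rw [Finset.mem_filter]
        refine ⟨Finset.mem_univ _, ?_⟩
        ext y
        rw [Finset.mem_inter, Finset.mem_insert, Finset.mem_singleton]
        constructor
        · rintro ⟨hyC, hyx | hyS⟩
          · exact hyx
          · exact absurd hyC (Finset.mem_sdiff.1 (hS hyS)).2
        · rintro rfl; exact ⟨hx, Or.inl rfl⟩
      · intro M hM
        rw [Finset.mem_filter] at hM
        have hxM : x ∈ M := by
          have : x ∈ C ∩ M := hM.2 ▸ Finset.mem_singleton_self x
          exact (Finset.mem_inter.1 this).2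
        exact Finset.insert_erase hxM
      · intro S hS
        rw [Finset.mem_powerset] at hS
        apply Finset.erase_insert
        intro hxS
        exact (Finset.mem_sdiff.1 (hS hxS)).2 hx
      · intro M hM
        rw [Finset.mem_filter] at hM
        have hxM : x ∈ M := by
          have : x ∈ C ∩ M := hM.2 ▸ Finset.mem_singleton_self x
          exact (Finset.mem_inter.1 this).2
        have hMpos : 0 < M.card := Finset.card_pos.2 ⟨x, hxM⟩
        rw [Finset.card_erase_of_mem hxM,
            show n - 1 - (M.card - 1) = n - M.card by omega]
    rw [hbij]
    have hcard : (Finset.univ \ C).card = n - C.card := by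
      rw [Finset.card_sdiff_of_subset (Finset.subset_univ C), Finset.card_univ]
    set c := C.card with hc
    have hc1 : 0 < c := Finset.card_pos.2 hC
    have hcn : c ≤ n := Finset.card_le_univ C
    rw [Finset.sum_powerset]
    have hinner : ∀ j ∈ Finset.range ((Finset.univ \ C).card + 1),
        (∑ S ∈ Finset.powersetCard j (Finset.univ \ C),
          ((S.card.factorial : ℝ) * ((n - 1 - S.card).factorial : ℝ)))
        = ((Finset.univ \ C).card.choose j) •
            ((j.factorial : ℝ) * ((n - 1 - j).factorial : ℝ)) := by
      intro j _
      exact Finset.sum_powersetCard j _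
        (fun k => ((k.factorial : ℝ) * ((n - 1 - k).factorial : ℝ)))
    rw [Finset.sum_congr rfl hinner, hcard]
    set m := n - c with hm
    have hmc : m + c = n := by omega
    have hN : ∑ j ∈ Finset.range (m + 1),
        ((m.choose j) • ((j.factorial : ℝ) * ((n - 1 - j).factorial : ℝ)))
        = ((∑ j ∈ Finset.range (m + 1),
            m.choose j * (j.factorial * (n - 1 - j).factorial) : ℕ) : ℝ) := by
      rw [Nat.cast_sum]
      refine Finset.sum_congr rfl fun j _ => ?_
      push_cast
      ring
    have hkey' : c * ∑ j ∈ Finset.range (m + 1),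
        m.choose j * (j.factorial * (n - 1 - j).factorial) = n.factorial := by
      rw [← hmc]
      exact key_nat_aux m c hc1
    rw [hN]
    have hfact : ((n.factorial : ℝ)) ≠ 0 := Nat.cast_ne_zero.2 (Nat.factorial_ne_zero n)
    have hcR : ((c : ℝ)) ≠ 0 := Nat.cast_ne_zero.2 hc1.ne'
    have hcast : ((c : ℝ)) * ((∑ j ∈ Finset.range (m + 1),
        m.choose j * (j.factorial * (n - 1 - j).factorial) : ℕ) : ℝ) = (n.factorial : ℝ) := by
      exact_mod_cast congrArg (Nat.cast : ℕ → ℝ) hkey'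
    rw [div_mul_eq_mul_div, one_mul, div_eq_div_iff hfact hcR, one_mul]
    linarith [hcast]
  · rw [if_neg hx]
    unfold SV
    rw [Finset.sum_eq_zero, mul_zero]
    intro M _
    rw [gC_diff_notmem hx, mul_zero]

lemma SV_PD {𝒞 : Finset (Finset α)} (h𝒞' : ∀ C ∈ 𝒞, C.Nonempty) (ω : ↥𝒞 → ℝ) (x : α) :
    SV (fun M => ∑ C : ↥𝒞, if (M ∩ C.1).Nonempty then ω C else 0) x
      = ∑ C : ↥𝒞, (if x ∈ C.1 then ω C / (C.1.card : ℝ) else 0) := by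
  have hfun : ∀ C : ↥𝒞,
      (fun M => if (M ∩ C.1).Nonempty then ω C else 0) = ω C • gC C.1 := by
    intro C
    funext M
    simp [gC, Pi.smul_apply, smul_eq_mul, mul_ite, Finset.inter_comm]
  rw [SV_sum']
  refine Finset.sum_congr rfl fun C _ => ?_
  rw [hfun C, SV_smul', SV_gC C.1 (h𝒞' C.1 C.2) x]
  by_cases hxC : x ∈ C.1 <;> simp [hxC, mul_one_div, div_eq_mul_inv]

end AuxLemmas

/-- The restriction of the Shapley value to `𝕡𝔻(𝒞)` is additive, Pareto efficient
and group proportional, and it is the unique map `Ψ : 𝕡𝔻(𝒞) → ℝ^X` with these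
three properties. -/
theorem stmt7 {α : Type*} [Fintype α] [DecidableEq α] [Nonempty α]
    (𝒞 : Finset (Finset α)) (h𝒞 : 𝒞.Nonempty) (h𝒞' : ∀ C ∈ 𝒞, C.Nonempty) :
    -- additivity of SV on 𝕡𝔻(𝒞)
    (∀ g₁ g₂ : Finset α → ℝ, g₁ ∈ PDset 𝒞 → g₂ ∈ PDset 𝒞 →
        SV (g₁ + g₂) = SV g₁ + SV g₂)
    -- Pareto efficiency of SV on 𝕡𝔻(𝒞)
    ∧ (∀ g ∈ PDset 𝒞, ∑ x : α, SV g x = g Finset.univ)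
    -- group proportionality of SV
    ∧ (∀ C ∈ 𝒞, ∀ (a : ℝ) (x : α),
        SV (a • gC C) x = if x ∈ C then a / (C.card : ℝ) else 0)
    -- uniqueness
    ∧ (∀ Ψ : ↥(PDset 𝒞) → α → ℝ,
        (∀ (g₁ g₂ : Finset α → ℝ) (h₁ : g₁ ∈ PDset 𝒞) (h₂ : g₂ ∈ PDset 𝒞)
            (h₁₂ : g₁ + g₂ ∈ PDset 𝒞),
          Ψ ⟨g₁ + g₂, h₁₂⟩ = Ψ ⟨g₁, h₁⟩ + Ψ ⟨g₂, h₂⟩) →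
        (∀ (g : Finset α → ℝ) (hg : g ∈ PDset 𝒞),
          ∑ x : α, Ψ ⟨g, hg⟩ x = g Finset.univ) →
        (∀ (C : Finset α) (_ : C ∈ 𝒞) (a : ℝ) (h : a • gC C ∈ PDset 𝒞) (x : α),
          Ψ ⟨a • gC C, h⟩ x = if x ∈ C then a / (C.card : ℝ) else 0) →
        ∀ (g : Finset α → ℝ) (hg : g ∈ PDset 𝒞), Ψ ⟨g, hg⟩ = SV g) := by
  classical
  refine ⟨?_, ?_, ?_, ?_⟩
  · -- additivity
    intro g₁ g₂ _ _
    funext x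
    have h : (g₁ + g₂) = fun M => g₁ M + g₂ M := rfl
    rw [h, Pi.add_apply, SV_add']
  · -- efficiency
    rintro g ⟨ω, rfl⟩
    have hx : ∀ x : α, SV (fun M => ∑ C : ↥𝒞, if (M ∩ C.1).Nonempty then ω C else 0) x
        = ∑ C : ↥𝒞, (if x ∈ C.1 then ω C / (C.1.card : ℝ) else 0) :=
      fun x => SV_PD h𝒞' ω x
    rw [Finset.sum_congr rfl (fun x _ => hx x), Finset.sum_comm]
    refine Finset.sum_congr rfl fun C _ => ?_
    have hCne : C.1.Nonempty := h𝒞' C.1 C.2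
    have hcpos : 0 < C.1.card := Finset.card_pos.2 hCne
    have hcR : ((C.1.card : ℝ)) ≠ 0 := Nat.cast_ne_zero.2 hcpos.ne'
    rw [if_pos (by rw [Finset.univ_inter]; exact hCne)]
    rw [Finset.sum_ite_mem, Finset.univ_inter, Finset.sum_const, nsmul_eq_mul]
    field_simp
  · -- group proportionality
    intro C hC a x
    rw [SV_smul', SV_gC C (h𝒞' C hC) x]
    by_cases hxC : x ∈ C <;> simp [hxC, mul_one_div, div_eq_mul_inv]
  · -- uniqueness
    intro Ψ hadd heff hprop g hg
    have hg' := hg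
    obtain ⟨ω, hgeq⟩ := hg'
    have hsingle : ∀ (C : Finset α) (hC : C ∈ 𝒞) (a : ℝ), a • gC C ∈ PDset 𝒞 := by
      intro C hC a
      refine ⟨fun D => if D.1 = C then a else 0, ?_⟩
      funext M
      rw [Finset.sum_eq_single (⟨C, hC⟩ : ↥𝒞)]
      · simp [gC, Finset.inter_comm, mul_ite]
      · intro D _ hD
        have hD' : D.1 ≠ C := fun h => hD (Subtype.ext h)
        simp [hD']
      · intro h
        exact absurd (Finset.mem_univ _) h
    have hGmem : ∀ S : Finset ↥𝒞,
        (fun M => ∑ C ∈ S, if (M ∩ C.1).Nonempty then ω C else 0) ∈ PDset 𝒞 := by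
      intro S
      refine ⟨fun C => if C ∈ S then ω C else 0, ?_⟩
      funext M
      have hswap : ∀ C : ↥𝒞,
          (if (M ∩ C.1).Nonempty then (if C ∈ S then ω C else 0) else 0)
          = (if C ∈ S then (if (M ∩ C.1).Nonempty then ω C else 0) else 0) := by
        intro C
        by_cases h1 : (M ∩ C.1).Nonempty <;> by_cases h2 : C ∈ S <;> simp [h1, h2]
      rw [Finset.sum_congr rfl (fun C _ => hswap C), Finset.sum_ite_mem,
        Finset.univ_inter]
    have hmain : ∀ S : Finset ↥𝒞,
        Ψ ⟨_, hGmem S⟩ = fun x => ∑ C ∈ S, (if x ∈ C.1 then ω C / (C.1.card : ℝ) else 0) := by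
      intro S
      induction S using Finset.induction_on with
      | empty =>
          obtain ⟨C₀, hC₀⟩ := h𝒞
          have h0 : (fun M : Finset α =>
              ∑ C ∈ (∅ : Finset ↥𝒞), if (M ∩ C.1).Nonempty then ω C else 0)
              = (0 : ℝ) • gC C₀ := by
            funext M
            simp
          have hmem := hsingle C₀ hC₀ 0
          have heq : (⟨_, hGmem ∅⟩ : ↥(PDset 𝒞)) = ⟨(0 : ℝ) • gC C₀, hmem⟩ := Subtype.ext h0
          rw [heq]
          funext x
          rw [hprop C₀ hC₀ 0 hmem x]
          simp
      | @insert D S hD ih =>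
          have hsplit : (fun M : Finset α =>
              ∑ C ∈ insert D S, if (M ∩ C.1).Nonempty then ω C else 0)
              = (ω D • gC D.1) +
                (fun M : Finset α => ∑ C ∈ S, if (M ∩ C.1).Nonempty then ω C else 0) := by
            funext M
            simp only [Finset.sum_insert hD, Pi.add_apply, Pi.smul_apply, gC, smul_eq_mul]
            rw [Finset.inter_comm M D.1]
            simp [mul_ite]
          have h1 := hsingle D.1 D.2 (ω D)
          have h2 := hGmem S
          have h12 : (ω D • gC D.1) +
              (fun M : Finset α => ∑ C ∈ S, if (M ∩ C.1).Nonempty then ω C else 0)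
              ∈ PDset 𝒞 := hsplit ▸ hGmem (insert D S)
          have heq : (⟨_, hGmem (insert D S)⟩ : ↥(PDset 𝒞)) = ⟨_, h12⟩ := Subtype.ext hsplit
          rw [heq, hadd _ _ h1 h2 h12]
          funext x
          rw [Pi.add_apply, hprop D.1 D.2 (ω D) h1 x, ih, Finset.sum_insert hD]
    have heq : (⟨g, hg⟩ : ↥(PDset 𝒞)) = ⟨_, hGmem Finset.univ⟩ :=
      Subtype.ext hgeq
    rw [heq, hmain Finset.univ]
    funext x
    rw [hgeq]
    exact (SV_PD h𝒞' ω x).symm
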